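/- arXiv:math/0409466 — 6 statements merged into one kernel-verified Lean document; each statement's English description precedes it below -/
import Mathlib

section
/- For n ≥ m ≥ k+1 ≥ 4, the join H = K_{m-3} + complement(K_{n-m+3}) does not contain K_m − P_k as a subgraph. -/
open SimpleGraph

/-- The multiset of vertex degrees of a finite simple graph. -/
noncomputable def degMS {V : Type*} (G : SimpleGraph V) [Fintype V] : Multiset ℕ :=
  Finset.univ.val.map fun v => Nat.card (G.neighborSet v)

/-- `Contains G H` : `G` contains a copy of `H` as a subgraph. -/
def Contains {V W : Type*} (G : SimpleGraph V) (H : SimpleGraph W) : Prop :=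
  ∃ f : W ↪ V, ∀ a b, H.Adj a b → G.Adj (f a) (f b)

/-- `K_m - P_k` : the complete graph on `m` vertices minus the `k` edges of a path
on the vertices `0, 1, ..., k`. -/
def KmPk (m k : ℕ) : SimpleGraph (Fin m) :=
  ⊤ \ SimpleGraph.fromRel (fun i j => (i : ℕ) + 1 = (j : ℕ) ∧ (j : ℕ) ≤ k)

/-- The join `K_{m-3} + complement (K_{n-m+3})` realized on `Fin n`:
the first `m-3` vertices form a clique joined to all remaining vertices. -/
def joinH (n m : ℕ) : SimpleGraph (Fin n) :=
  SimpleGraph.fromRel (fun i _ => (i : ℕ) < m - 3)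

lemma nonadj_KmPk (m k : ℕ) (a b : Fin m) (hab : a ≠ b) (h : ¬ (KmPk m k).Adj a b) :
    ((a : ℕ) + 1 = (b : ℕ) ∧ (b : ℕ) ≤ k) ∨ ((b : ℕ) + 1 = (a : ℕ) ∧ (a : ℕ) ≤ k) := by
  by_contra hcon
  apply h
  simp only [KmPk, SimpleGraph.sdiff_adj, SimpleGraph.top_adj, SimpleGraph.fromRel_adj]
  refine ⟨hab, ?_⟩
  tauto

theorem stmt1 (n m k : ℕ) (hk : 4 ≤ k + 1) (hm : k + 1 ≤ m) (hn : m ≤ n) :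
    ¬ Contains (joinH n m) (KmPk m k) := by
  rintro ⟨f, hf⟩
  set T := Finset.univ.filter (fun a : Fin m => (f a : ℕ) < m - 3) with hT
  have hTcard : T.card ≤ m - 3 := by
    have h1 : T.card ≤ (Finset.range (m - 3)).card :=
      Finset.card_le_card_of_injOn (fun a => (f a : ℕ))
        (fun a ha => Finset.mem_range.mpr (Finset.mem_filter.mp ha).2)
        (fun a _ b _ h => f.injective (Fin.val_injective h))
    simpa using h1
  have h2 : 2 < Tᶜ.card := by
    have h1 : Tᶜ.card = m - T.card := by
      rw [Finset.card_compl]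
      simp
    omega
  obtain ⟨a, b, c, ha, hb, hc, hab, hac, hbc⟩ := Finset.two_lt_card_iff.mp h2
  have hmem : ∀ x : Fin m, x ∈ Tᶜ → ¬ ((f x : ℕ) < m - 3) := by
    intro x hx
    simpa [hT] using Finset.mem_compl.mp hx
  have key : ∀ x y : Fin m, x ∈ Tᶜ → y ∈ Tᶜ → x ≠ y →
      ((x : ℕ) + 1 = (y : ℕ) ∧ (y : ℕ) ≤ k) ∨ ((y : ℕ) + 1 = (x : ℕ) ∧ (x : ℕ) ≤ k) := by
    intro x y hx hy hxy
    refine nonadj_KmPk m k x y hxy ?_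
    intro hadj
    have := hf x y hadj
    simp only [joinH, SimpleGraph.fromRel_adj] at this
    exact this.2.elim (hmem x hx) (hmem y hy)
  have h1 := key a b ha hb hab
  have h2' := key a c ha hc hac
  have h3 := key b c hb hc hbc
  omega
end

section
/- For every n ≥ 5, the sequence consisting of one term n−1 followed by n−1 terms equal to 3 is graphical only if n is even or n−1 is even appropriately (degree sum even), and when graphical it has a realization containing K_5 − P_3 as a subgraph. -/
open SimpleGraph

/-- Hub-plus-cycle graph: vertex `0` joined to everything, vertices `1,…,n-1` a cycle. -/
def myG (n : ℕ) : SimpleGraph (Fin n) :=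
  SimpleGraph.fromRel (fun i j => (i : ℕ) = 0 ∨ ((j : ℕ) = (i : ℕ) + 1 ∧ 1 ≤ (i : ℕ)) ∨
    ((i : ℕ) = n - 1 ∧ (j : ℕ) = 1))

instance myGdec (n : ℕ) : DecidableRel (myG n).Adj := fun a b =>
  decidable_of_iff _ (SimpleGraph.fromRel_adj _ a b).symm

lemma myG_deg_hub (n : ℕ) (hn : 5 ≤ n) (v : Fin n) (hv : (v : ℕ) = 0) :
    (myG n).degree v = n - 1 := by
  have hnb : (myG n).neighborFinset v = Finset.univ.erase v := by
    ext j
    have hjlt := j.isLt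
    rw [mem_neighborFinset]
    simp only [mem_neighborFinset, myG, fromRel_adj, Finset.mem_erase, Finset.mem_univ,
      and_true, ne_eq, Fin.ext_iff]
    omega
  rw [SimpleGraph.degree, hnb, Finset.card_erase_of_mem (Finset.mem_univ v),
    Finset.card_univ, Fintype.card_fin]

lemma myG_deg_three (n : ℕ) (hn : 5 ≤ n) (v : Fin n) (hv : (v : ℕ) ≠ 0) :
    (myG n).degree v = 3 := by
  have hvlt := v.isLt
  have h1 : 1 ≤ (v:ℕ) := by omega
  set sc : Fin n := ⟨if (v:ℕ) = n - 1 then 1 else (v:ℕ) + 1, by split <;> omega⟩ with hsc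
  set pr : Fin n := ⟨if (v:ℕ) = 1 then n - 1 else (v:ℕ) - 1, by split <;> omega⟩ with hpr
  have hnb : (myG n).neighborFinset v = {⟨0, by omega⟩, sc, pr} := by
    ext j
    have hjlt := j.isLt
    rw [mem_neighborFinset]
    simp only [mem_neighborFinset, myG, fromRel_adj, Finset.mem_insert,
      Finset.mem_singleton, ne_eq, Fin.ext_iff, hsc, hpr]
    split_ifs <;> first | exact not_false | omega
  rw [SimpleGraph.degree, hnb]
  rw [Finset.card_eq_three]
  refine ⟨⟨0, by omega⟩, sc, pr, ?_, ?_, ?_, rfl⟩ <;>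
    simp only [ne_eq, hsc, hpr, Fin.mk.injEq, Fin.ext_iff] <;>
    split_ifs <;> first | exact not_false | omega

lemma myG_degMS (n : ℕ) (hn : 5 ≤ n) :
    degMS (myG n) = (n - 1) ::ₘ Multiset.replicate (n - 1) 3 := by
  classical
  set z : Fin n := ⟨0, by omega⟩ with hz
  have hfe : (fun v : Fin n => Nat.card ((myG n).neighborSet v)) =
      fun v => (myG n).degree v := by
    funext v
    rw [Nat.card_eq_fintype_card]
    exact SimpleGraph.card_neighborSet_eq_degree _ v
  have hu : (Finset.univ : Finset (Fin n)).val = z ::ₘ (Finset.univ.val.erase z) :=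
    (Multiset.cons_erase (Finset.mem_univ z)).symm
  rw [degMS, hfe, hu, Multiset.map_cons, myG_deg_hub n hn z rfl]
  congr 1
  apply Multiset.eq_replicate.2
  constructor
  · rw [Multiset.card_map, Multiset.card_erase_of_mem (Finset.mem_univ z)]
    simp [Finset.card_univ]
  · intro b hb
    obtain ⟨v, hv, rfl⟩ := Multiset.mem_map.1 hb
    have hvz : v ≠ z := ((Multiset.Nodup.mem_erase_iff Finset.univ.nodup).1 hv).1
    exact myG_deg_three n hn v (by simpa [hz, Fin.ext_iff] using hvz)

/-- vertex relabeling `0↦2, 1↦4, 2↦1, 3↦3, 4↦0`. -/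
def gfun : ℕ → ℕ := fun k =>
  if k = 0 then 2 else if k = 1 then 4 else if k = 2 then 1 else if k = 3 then 3 else 0

lemma gfun_lt (k : ℕ) : gfun k < 5 := by unfold gfun; split_ifs <;> omega

lemma myG_contains (n : ℕ) (hn : 5 ≤ n) : Contains (myG n) (KmPk 5 3) := by
  refine ⟨⟨fun i => ⟨gfun i.val, lt_of_lt_of_le (gfun_lt _) hn⟩, ?_⟩, ?_⟩
  · intro a b h
    have ha := a.isLt
    have hb := b.isLt
    have h' : gfun a.val = gfun b.val := congrArg Fin.val h
    apply Fin.ext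
    unfold gfun at h'
    split_ifs at h' <;> omega
  · intro a b hab
    have ha := a.isLt
    have hb := b.isLt
    simp only [KmPk, sdiff_adj, top_adj, fromRel_adj, ne_eq, Fin.ext_iff, not_and, not_or,
      not_forall] at hab
    simp only [myG, fromRel_adj, ne_eq, Fin.ext_iff, Function.Embedding.coeFn_mk, gfun]
    split_ifs <;> first | omega | exact ⟨not_false, by omega⟩

theorem stmt7 (n : ℕ) (hn : 5 ≤ n) :
    ((∃ G : SimpleGraph (Fin n), degMS G = (n - 1) ::ₘ Multiset.replicate (n - 1) 3) →
      Even ((n - 1) ::ₘ Multiset.replicate (n - 1) 3).sum) ∧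
    ((∃ G : SimpleGraph (Fin n), degMS G = (n - 1) ::ₘ Multiset.replicate (n - 1) 3) →
      ∃ G : SimpleGraph (Fin n),
        degMS G = (n - 1) ::ₘ Multiset.replicate (n - 1) 3 ∧ Contains G (KmPk 5 3)) := by
  constructor
  · intro _
    rw [Multiset.sum_cons, Multiset.sum_replicate, smul_eq_mul]
    exact ⟨2 * (n - 1), by omega⟩
  · intro _
    exact ⟨myG n, myG_degMS n hn, myG_contains n hn⟩
end

section
/- For n ≥ m ≥ k+1 ≥ 4, there exists an n-term graphical sequence S with degree sum (2m−6)n − (m−3)(m−2) such that no realization of S contains K_m − P_k as a subgraph; hence σ(K_m − P_k, n) ≥ (2m−6)n − (m−3)(m−2) + 2. -/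
open SimpleGraph

lemma card_filter_lt (n c : ℕ) (h : c ≤ n) :
    (Finset.univ.filter (fun j : Fin n => (j : ℕ) < c)).card = c := by
  have e : {j : Fin n // (j : ℕ) < c} ≃ Fin c :=
    { toFun := fun j => ⟨j.1, j.2⟩
      invFun := fun i => ⟨⟨i.1, lt_of_lt_of_le i.2 h⟩, i.2⟩
      left_inv := fun j => by ext; rfl
      right_inv := fun i => rfl }
  rw [← Fintype.card_subtype]
  simpa using Fintype.card_congr e

lemma joinH_adj {n m : ℕ} (v w : Fin n) :
    (joinH n m).Adj v w ↔ v ≠ w ∧ ((v : ℕ) < m - 3 ∨ (w : ℕ) < m - 3) := by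
  simp [joinH, fromRel_adj]

lemma joinH_card (n m : ℕ) (hm : 4 ≤ m) (hn : m ≤ n) (v : Fin n) :
    Nat.card ((joinH n m).neighborSet v) =
      if (v : ℕ) < m - 3 then n - 1 else m - 3 := by
  classical
  split
  case isTrue h =>
    have hs : (joinH n m).neighborSet v = {w | w ≠ v} := by
      ext w
      simp only [mem_neighborSet, joinH_adj, Set.mem_setOf_eq]
      constructor
      · rintro ⟨h1, _⟩; exact h1.symm
      · intro h1; exact ⟨h1.symm, Or.inl h⟩
    rw [hs]
    rw [Nat.card_eq_fintype_card]
    simp [Fintype.card_subtype_compl, Finset.filter_ne']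
  case isFalse h =>
    have hs : (joinH n m).neighborSet v = {w : Fin n | (w : ℕ) < m - 3} := by
      ext w
      simp only [mem_neighborSet, joinH_adj, Set.mem_setOf_eq]
      constructor
      · rintro ⟨h1, h2 | h2⟩
        · exact absurd h2 h
        · exact h2
      · intro h1
        refine ⟨fun hvw => h (hvw ▸ h1), Or.inr h1⟩
    rw [hs, Nat.card_eq_fintype_card, Fintype.card_subtype]
    exact card_filter_lt n (m - 3) (by omega)

lemma degMS_joinH (n m : ℕ) (hm : 4 ≤ m) (hn : m ≤ n) :
    degMS (joinH n m) = Finset.univ.val.map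
      (fun v : Fin n => if (v : ℕ) < m - 3 then n - 1 else m - 3) :=
  Multiset.map_congr rfl (fun v _ => joinH_card n m hm hn v)

lemma sum_joinH (n m : ℕ) (hm : 4 ≤ m) (hn : m ≤ n) :
    (degMS (joinH n m)).sum = (2 * m - 6) * n - (m - 3) * (m - 2) := by
  rw [degMS_joinH n m hm hn]
  have h1 : (Finset.univ.val.map
      (fun v : Fin n => if (v : ℕ) < m - 3 then n - 1 else m - 3)).sum
      = ∑ v : Fin n, (if (v : ℕ) < m - 3 then n - 1 else m - 3) := rfl
  rw [h1, Finset.sum_ite, Finset.sum_const, Finset.sum_const, smul_eq_mul, smul_eq_mul]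
  have h2 : (Finset.univ.filter (fun v : Fin n => (v : ℕ) < m - 3)).card = m - 3 :=
    card_filter_lt n (m - 3) (by omega)
  have h3 : (Finset.univ.filter (fun v : Fin n => ¬ (v : ℕ) < m - 3)).card = n - (m - 3) := by
    have := Finset.card_filter_add_card_filter_not (s := (Finset.univ : Finset (Fin n)))
      (p := fun v : Fin n => (v : ℕ) < m - 3)
    simp only [Finset.card_univ, Fintype.card_fin] at this
    omega
  rw [h2, h3]
  obtain ⟨a, rfl⟩ : ∃ a, m = a + 4 := ⟨m - 4, by omega⟩
  obtain ⟨b, rfl⟩ : ∃ b, n = a + 4 + b := ⟨n - (a + 4), by omega⟩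
  have e1 : a + 4 - 3 = a + 1 := by omega
  have e2 : a + 4 + b - 1 = a + 3 + b := by omega
  have e3 : a + 4 + b - (a + 1) = b + 3 := by omega
  have e4 : 2 * (a + 4) - 6 = 2 * a + 2 := by omega
  have e5 : a + 4 - 2 = a + 2 := by omega
  rw [e1, e2, e3, e4, e5]
  exact (Nat.sub_eq_of_eq_add (by ring)).symm

lemma key_nocontain (n m k : ℕ) (hm : 4 ≤ m) (hn : m ≤ n)
    (G : SimpleGraph (Fin n)) (hG : degMS G = degMS (joinH n m)) :
    ¬ Contains G (KmPk m k) := by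
  classical
  rintro ⟨f, hf⟩
  have hdeg : ∀ v, Nat.card (G.neighborSet v) = G.degree v := fun v => by
    rw [Nat.card_eq_fintype_card]
    exact SimpleGraph.card_neighborSet_eq_degree G v
  have hGd : degMS G = Finset.univ.val.map (fun v => G.degree v) := by
    unfold degMS
    exact Multiset.map_congr rfl (fun v _ => hdeg v)
  have hJd := degMS_joinH n m hm hn
  set d : Fin n → ℕ := fun v => if (v : ℕ) < m - 3 then n - 1 else m - 3 with hd
  have hne : n - 1 ≠ m - 3 := by omega
  set U : Finset (Fin n) := Finset.univ.filter (fun v => (n - 1 : ℕ) = G.degree v) with hUdef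
  have hUcard : U.card = m - 3 := by
    have h1 : Multiset.count (n - 1) (Finset.univ.val.map (fun v => G.degree v))
        = Multiset.count (n - 1) (Finset.univ.val.map d) := by
      rw [← hGd, ← hJd, hG]
    rw [Multiset.count_map, Multiset.count_map] at h1
    have h2 : U.card = (Multiset.filter (fun v => (n - 1 : ℕ) = G.degree v)
        Finset.univ.val).card := by
      rw [hUdef]; rfl
    have h3 : (Multiset.filter (fun v : Fin n => (n - 1 : ℕ) = d v)
        Finset.univ.val).card
        = (Finset.univ.filter (fun v : Fin n => (v : ℕ) < m - 3)).card := by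
      congr 1
      have : (Finset.univ.filter (fun v : Fin n => (v : ℕ) < m - 3)).val
          = Multiset.filter (fun v : Fin n => (v : ℕ) < m - 3) Finset.univ.val := rfl
      rw [this]
      apply Multiset.filter_congr
      intro v _
      rw [hd]
      constructor
      · intro h
        by_contra hc
        simp only [if_neg hc] at h
        exact hne h
      · intro h
        simp [if_pos h]
    rw [h2, h1, h3, card_filter_lt n (m - 3) (by omega)]
  have hmem : ∀ v, G.degree v = n - 1 ∨ G.degree v = m - 3 := by
    intro v
    have h1 : G.degree v ∈ degMS G := by
      rw [hGd]
      exact Multiset.mem_map_of_mem _ (Finset.mem_univ v)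
    rw [hG, hJd] at h1
    obtain ⟨u, _, hu⟩ := Multiset.mem_map.mp h1
    rw [hd] at hu
    dsimp only at hu
    split at hu
    · left; exact hu.symm
    · right; exact hu.symm
  have hadj : ∀ u, G.degree u = n - 1 → ∀ v, v ≠ u → G.Adj u v := by
    intro u hu v hv
    have hsub : G.neighborFinset u ⊆ Finset.univ.erase u := by
      intro w hw
      exact Finset.mem_erase.mpr ⟨(G.mem_neighborFinset u w |>.mp hw).ne', Finset.mem_univ w⟩
    have hcard : (Finset.univ.erase u).card ≤ (G.neighborFinset u).card := by
      rw [Finset.card_erase_of_mem (Finset.mem_univ u), Finset.card_univ, Fintype.card_fin]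
      have : (G.neighborFinset u).card = G.degree u := rfl
      omega
    have heq := Finset.eq_of_subset_of_card_le hsub hcard
    have : v ∈ G.neighborFinset u := by
      rw [heq]
      exact Finset.mem_erase.mpr ⟨hv, Finset.mem_univ v⟩
    exact (G.mem_neighborFinset u v).mp this
  have hlow : ∀ v, G.degree v = m - 3 → G.neighborFinset v = U := by
    intro v hv
    have hsub : U ⊆ G.neighborFinset v := by
      intro u hu
      rw [hUdef, Finset.mem_filter] at hu
      have hdu : G.degree u = n - 1 := hu.2.symm
      have huv : u ≠ v := by
        intro h; rw [h, hv] at hdu; omega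
      exact (G.mem_neighborFinset v u).mpr (hadj u hdu v (Ne.symm huv)).symm
    have hcard : (G.neighborFinset v).card ≤ U.card := by
      have : (G.neighborFinset v).card = G.degree v := rfl
      omega
    exact (Finset.eq_of_subset_of_card_le hsub hcard).symm
  set A : Finset (Fin m) :=
    Finset.univ.filter (fun a => ¬ ((n - 1 : ℕ) = G.degree (f a))) with hAdef
  have hstep : ∀ a ∈ A, ∀ b ∈ A, a ≠ b →
      ((a : ℕ) + 1 = (b : ℕ) ∧ (b : ℕ) ≤ k) ∨ ((b : ℕ) + 1 = (a : ℕ) ∧ (a : ℕ) ≤ k) := by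
    intro a ha b hb hab
    rw [hAdef, Finset.mem_filter] at ha hb
    have hda : G.degree (f a) = m - 3 := (hmem (f a)).resolve_left (fun h => ha.2 h.symm)
    have hnb : f b ∉ U := by
      rw [hUdef, Finset.mem_filter]
      intro h
      exact hb.2 h.2
    have hnadj : ¬ G.Adj (f a) (f b) := by
      intro h
      exact hnb ((hlow (f a) hda) ▸ (G.mem_neighborFinset (f a) (f b)).mpr h)
    have hnH : ¬ (KmPk m k).Adj a b := fun h => hnadj (hf a b h)
    by_contra hcon
    apply hnH
    rw [KmPk, SimpleGraph.sdiff_adj, SimpleGraph.top_adj, SimpleGraph.fromRel_adj]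
    exact ⟨hab, fun h => hcon h.2⟩
  have hA2 : A.card ≤ 2 := by
    by_contra h
    rw [not_le] at h
    obtain ⟨a, ha, b, hb, c, hc, hab, hac, hbc⟩ := Finset.two_lt_card.mp h
    have h1 := hstep a ha b hb hab
    have h2 := hstep a ha c hc hac
    have h3 := hstep b hb c hc hbc
    have v1 : (a : ℕ) ≠ b := fun h => hab (Fin.ext h)
    have v2 : (a : ℕ) ≠ c := fun h => hac (Fin.ext h)
    have v3 : (b : ℕ) ≠ c := fun h => hbc (Fin.ext h)
    omega
  have hmaps : ∀ a ∈ Aᶜ, f a ∈ U := by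
    intro a ha
    rw [Finset.mem_compl, hAdef, Finset.mem_filter, not_and, not_not] at ha
    rw [hUdef, Finset.mem_filter]
    exact ⟨Finset.mem_univ _, ha (Finset.mem_univ a)⟩
  have hinj := Finset.card_le_card_of_injOn f hmaps (f.injective.injOn)
  rw [Finset.card_compl, Fintype.card_fin, hUcard] at hinj
  omega

lemma even_target (n m : ℕ) (hm : 4 ≤ m) (hn : m ≤ n) :
    Even ((2 * m - 6) * n - (m - 3) * (m - 2)) := by
  obtain ⟨a, rfl⟩ : ∃ a, m = a + 4 := ⟨m - 4, by omega⟩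
  obtain ⟨b, rfl⟩ : ∃ b, n = a + 4 + b := ⟨n - (a + 4), by omega⟩
  have e4 : 2 * (a + 4) - 6 = 2 * a + 2 := by omega
  have e1 : a + 4 - 3 = a + 1 := by omega
  have e5 : a + 4 - 2 = a + 2 := by omega
  rw [e4, e1, e5]
  have h : (2 * a + 2) * (a + 4 + b) - (a + 1) * (a + 2) = (a + 1) * (a + 6 + 2 * b) := by
    apply Nat.sub_eq_of_eq_add
    ring
  rw [h]
  rcases Nat.even_or_odd a with he | ho
  · obtain ⟨r, hr⟩ := he
    exact (Nat.even_mul).mpr (Or.inr ⟨r + 3 + b, by omega⟩)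
  · obtain ⟨r, hr⟩ := ho
    exact (Nat.even_mul).mpr (Or.inl ⟨r + 1, by omega⟩)

theorem stmt10 (n m k : ℕ) (hk : 4 ≤ k + 1) (hm : k + 1 ≤ m) (hn : m ≤ n) :
    (∃ s : Multiset ℕ, s.card = n ∧
      (∃ G : SimpleGraph (Fin n), degMS G = s) ∧
      s.sum = (2 * m - 6) * n - (m - 3) * (m - 2) ∧
      ∀ G : SimpleGraph (Fin n), degMS G = s → ¬ Contains G (KmPk m k)) ∧
    (∀ l : ℕ, Even l →
      (∀ s : Multiset ℕ, s.card = n → (∃ G : SimpleGraph (Fin n), degMS G = s) →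
        l ≤ s.sum →
        ∃ G : SimpleGraph (Fin n), degMS G = s ∧ Contains G (KmPk m k)) →
      (2 * m - 6) * n - (m - 3) * (m - 2) + 2 ≤ l) := by
  have hm4 : 4 ≤ m := le_trans hk hm
  have hcard : (degMS (joinH n m)).card = n := by
    unfold degMS
    rw [Multiset.card_map]
    simp
  have hsum := sum_joinH n m hm4 hn
  refine ⟨⟨degMS (joinH n m), hcard, ⟨joinH n m, rfl⟩, hsum,
    fun G hG => key_nocontain n m k hm4 hn G hG⟩, ?_⟩
  intro l hl hP
  by_contra hlt
  rw [not_le] at hlt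
  have hle : l ≤ (degMS (joinH n m)).sum := by
    obtain ⟨c, hc⟩ := hl
    obtain ⟨d, hd⟩ := even_target n m hm4 hn
    omega
  obtain ⟨G, hG, hC⟩ := hP (degMS (joinH n m)) hcard ⟨joinH n m, rfl⟩ hle
  exact key_nocontain n m k hm4 hn G hG hC
end

section
/- For every n ≥ 4, σ(K_4 − P_3, n) = 2n: every n-term graphical sequence with degree sum at least 2n has a realization containing K_4 − P_3, and the bound 2n is tight. -/
open SimpleGraph

open Finset

section Aux

lemma hadj4 : ∀ a b : Fin 4, (KmPk 4 3).Adj a b ↔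
    ((a = 0 ∧ b = 2) ∨ (a = 2 ∧ b = 0) ∨ (a = 0 ∧ b = 3) ∨ (a = 3 ∧ b = 0) ∨
      (a = 1 ∧ b = 3) ∨ (a = 3 ∧ b = 1)) := by
  intro a b
  rw [KmPk, SimpleGraph.sdiff_adj, SimpleGraph.fromRel_adj, SimpleGraph.top_adj]
  fin_cases a <;> fin_cases b <;> simp

lemma degMS_eq {n : ℕ} (G : SimpleGraph (Fin n)) [DecidableRel G.Adj] :
    degMS G = Finset.univ.val.map (fun v => G.degree v) := by
  unfold degMS
  congr 1
  ext v
  rw [Nat.card_eq_fintype_card, SimpleGraph.card_neighborSet_eq_degree]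

lemma contains_of_path {n : ℕ} {G : SimpleGraph (Fin n)} {v u w x : Fin n}
    (hvu : G.Adj v u) (huw : G.Adj u w) (hvx : G.Adj v x)
    (hwv : w ≠ v) (hxu : x ≠ u) (hxw : x ≠ w) : Contains G (KmPk 4 3) := by
  have hinj : Function.Injective ![v, w, x, u] := by
    intro a b hab
    fin_cases a <;> fin_cases b <;> simp_all
  refine ⟨⟨![v, w, x, u], hinj⟩, ?_⟩
  · intro a b hab
    rw [hadj4] at hab
    rcases hab with ⟨rfl,rfl⟩|⟨rfl,rfl⟩|⟨rfl,rfl⟩|⟨rfl,rfl⟩|⟨rfl,rfl⟩|⟨rfl,rfl⟩ <;>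
      simp [hvu, hvx, huw, hvu.symm, hvx.symm, huw.symm]

lemma deg_one_of_adj_high {n : ℕ} {G : SimpleGraph (Fin n)} [DecidableRel G.Adj]
    (hP : ¬ Contains G (KmPk 4 3)) {v u : Fin n} (hv : 3 ≤ G.degree v)
    (hadj : G.Adj v u) : G.degree u = 1 := by
  by_contra h
  have h1 : 1 ≤ G.degree u := by
    rw [← SimpleGraph.card_neighborFinset_eq_degree]
    exact Finset.card_pos.2 ⟨v, by simp [hadj.symm]⟩
  have h2 : 2 ≤ G.degree u := by omega
  obtain ⟨w, hw, hwv⟩ : ∃ w ∈ G.neighborFinset u, w ≠ v := by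
    by_contra hc
    push_neg at hc
    have : G.neighborFinset u ⊆ {v} := fun y hy => Finset.mem_singleton.2 (hc y hy)
    have := Finset.card_le_card this
    simp [SimpleGraph.card_neighborFinset_eq_degree] at this
    omega
  obtain ⟨x, hx⟩ : ∃ x, x ∈ G.neighborFinset v \ {u, w} := by
    apply Finset.card_pos.1
    have := Finset.card_le_card_sdiff_add_card (s := G.neighborFinset v)
      (t := ({u, w} : Finset (Fin n)))
    have hc2 : ({u, w} : Finset (Fin n)).card ≤ 2 :=
      Finset.card_insert_le _ _ |>.trans (by simp)
    rw [SimpleGraph.card_neighborFinset_eq_degree] at this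
    omega
  simp only [Finset.mem_sdiff, Finset.mem_insert, Finset.mem_singleton,
    SimpleGraph.mem_neighborFinset] at hx hw
  push_neg at hx
  exact hP (contains_of_path hadj hw hx.1 hwv hx.2.1 hx.2.2)

lemma all_deg_two {n : ℕ} {G : SimpleGraph (Fin n)} [DecidableRel G.Adj]
    (hP : ¬ Contains G (KmPk 4 3)) (hsum : 2 * n ≤ ∑ v : Fin n, G.degree v) :
    ∀ v : Fin n, G.degree v = 2 := by
  have hB : ∑ v ∈ univ.filter (fun v => 3 ≤ G.degree v), G.degree v
      ≤ (univ.filter (fun v => G.degree v = 1)).card := by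
    have hdisj : ∀ a ∈ univ.filter (fun v => 3 ≤ G.degree v),
        ∀ b ∈ univ.filter (fun v => 3 ≤ G.degree v), a ≠ b →
        Disjoint (G.neighborFinset a) (G.neighborFinset b) := by
      intro a ha b hb hab
      simp only [Finset.mem_filter, Finset.mem_univ, true_and] at ha hb
      refine Finset.disjoint_left.2 fun u hu hu' => ?_
      rw [SimpleGraph.mem_neighborFinset] at hu hu'
      have h1 : G.degree u = 1 := deg_one_of_adj_high hP ha hu
      have : ({a, b} : Finset (Fin n)) ⊆ G.neighborFinset u := by
        intro y hy
        rcases Finset.mem_insert.1 hy with rfl | hy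
        · exact SimpleGraph.mem_neighborFinset _ _ _ |>.2 hu.symm
        · rw [Finset.mem_singleton] at hy; subst hy
          exact SimpleGraph.mem_neighborFinset _ _ _ |>.2 hu'.symm
      have h2 := Finset.card_le_card this
      rw [Finset.card_pair hab, SimpleGraph.card_neighborFinset_eq_degree] at h2
      omega
    calc ∑ v ∈ univ.filter (fun v => 3 ≤ G.degree v), G.degree v
        = ((univ.filter (fun v => 3 ≤ G.degree v)).biUnion
            (fun v => G.neighborFinset v)).card := by
          rw [Finset.card_biUnion hdisj]
          exact Finset.sum_congr rfl fun v _ =>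
            (SimpleGraph.card_neighborFinset_eq_degree _ _).symm
      _ ≤ (univ.filter (fun v => G.degree v = 1)).card := by
          apply Finset.card_le_card
          intro u hu
          rcases Finset.mem_biUnion.1 hu with ⟨v, hv, hu⟩
          simp only [Finset.mem_filter, Finset.mem_univ, true_and] at hv ⊢
          exact deg_one_of_adj_high hP hv (SimpleGraph.mem_neighborFinset _ _ _ |>.1 hu)
  have hpt : ∀ v : Fin n, G.degree v + (if G.degree v = 1 then 1 else 0)
      + 2 * (if G.degree v = 0 then 1 else 0)
      + 2 * (if 3 ≤ G.degree v then 1 else 0)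
      = 2 + (if 3 ≤ G.degree v then G.degree v else 0) := by
    intro v; split_ifs <;> omega
  have hsum2 : (∑ v : Fin n, G.degree v) + (univ.filter (fun v => G.degree v = 1)).card
      + 2 * (univ.filter (fun v => G.degree v = 0)).card
      + 2 * (univ.filter (fun v => 3 ≤ G.degree v)).card
      = 2 * n + ∑ v ∈ univ.filter (fun v => 3 ≤ G.degree v), G.degree v := by
    calc (∑ v : Fin n, G.degree v) + (univ.filter (fun v => G.degree v = 1)).card
        + 2 * (univ.filter (fun v => G.degree v = 0)).card
        + 2 * (univ.filter (fun v => 3 ≤ G.degree v)).card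
        = ∑ v : Fin n, (G.degree v + (if G.degree v = 1 then 1 else 0)
          + 2 * (if G.degree v = 0 then 1 else 0)
          + 2 * (if 3 ≤ G.degree v then 1 else 0)) := by
          rw [Finset.sum_add_distrib, Finset.sum_add_distrib, Finset.sum_add_distrib,
            ← Finset.mul_sum, ← Finset.mul_sum, Finset.card_filter, Finset.card_filter,
            Finset.card_filter]
      _ = ∑ v : Fin n, (2 + (if 3 ≤ G.degree v then G.degree v else 0)) :=
          Finset.sum_congr rfl (fun v _ => hpt v)
      _ = 2 * n + ∑ v ∈ univ.filter (fun v => 3 ≤ G.degree v), G.degree v := by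
          rw [Finset.sum_add_distrib, Finset.sum_const, Finset.sum_filter]
          simp [mul_comm]
  have hsA : 3 * (univ.filter (fun v => 3 ≤ G.degree v)).card
      ≤ ∑ v ∈ univ.filter (fun v => 3 ≤ G.degree v), G.degree v := by
    calc 3 * (univ.filter (fun v => 3 ≤ G.degree v)).card
        = ∑ _v ∈ univ.filter (fun v => 3 ≤ G.degree v), 3 := by
          rw [Finset.sum_const, smul_eq_mul, mul_comm]
      _ ≤ _ := Finset.sum_le_sum fun v hv => (Finset.mem_filter.1 hv).2
  have hAC : (univ.filter (fun v => 3 ≤ G.degree v)).card = 0 ∧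
      (univ.filter (fun v => G.degree v = 0)).card = 0 := by omega
  have hAe : (univ.filter (fun v => 3 ≤ G.degree v)) = (∅ : Finset (Fin n)) :=
    Finset.card_eq_zero.1 hAC.1
  rw [hAe, Finset.sum_empty] at hsum2
  have hBC : (univ.filter (fun v => G.degree v = 1)).card = 0 := by omega
  intro v
  by_contra hv
  have h1 : ¬ (3 ≤ G.degree v) := fun h => by
    have hm : v ∈ univ.filter (fun v => 3 ≤ G.degree v) :=
      Finset.mem_filter.2 ⟨Finset.mem_univ v, h⟩
    rw [hAe] at hm; exact absurd hm (Finset.notMem_empty v)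
  have h2 : G.degree v ≠ 0 := fun h => by
    have hm : v ∈ univ.filter (fun v => G.degree v = 0) :=
      Finset.mem_filter.2 ⟨Finset.mem_univ v, h⟩
    have := Finset.card_pos.2 ⟨v, hm⟩; omega
  have h3 : G.degree v ≠ 1 := fun h => by
    have hm : v ∈ univ.filter (fun v => G.degree v = 1) :=
      Finset.mem_filter.2 ⟨Finset.mem_univ v, h⟩
    have := Finset.card_pos.2 ⟨v, hm⟩; omega
  omega

/-- The cycle graph on `Fin n`. -/
def cyc (n : ℕ) : SimpleGraph (Fin n) :=
  SimpleGraph.fromRel (fun i j => (i : ℕ) + 1 = (j : ℕ) ∨ ((i : ℕ) = n - 1 ∧ (j : ℕ) = 0))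

lemma cyc_deg {n : ℕ} (hn : 4 ≤ n) (v : Fin n) [DecidableRel (cyc n).Adj] :
    (cyc n).degree v = 2 := by
  have hvlt := v.isLt
  have ha : (if v.val + 1 = n then 0 else v.val + 1) < n := by split_ifs <;> omega
  have hb : (if v.val = 0 then n - 1 else v.val - 1) < n := by split_ifs <;> omega
  have hne : (⟨_, ha⟩ : Fin n) ≠ ⟨_, hb⟩ := by
    simp only [ne_eq, Fin.mk.injEq]
    split_ifs <;> omega
  have hN : (cyc n).neighborFinset v = {⟨_, ha⟩, ⟨_, hb⟩} := by
    ext u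
    have hult := u.isLt
    rw [SimpleGraph.mem_neighborFinset]
    simp only [cyc, SimpleGraph.fromRel_adj, Finset.mem_insert,
      Finset.mem_singleton, Fin.ext_iff, ne_eq]
    constructor
    · rintro ⟨h1, h2⟩
      split_ifs <;> omega
    · intro h
      rcases h with h | h <;> rw [h] <;> constructor <;> split_ifs at h ⊢ <;> omega
  rw [← SimpleGraph.card_neighborFinset_eq_degree, hN, Finset.card_pair hne]

lemma cyc_contains {n : ℕ} (hn : 4 ≤ n) : Contains (cyc n) (KmPk 4 3) := by
  have h0 : (0 : ℕ) < n := by omega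
  have h1 : (1 : ℕ) < n := by omega
  have h2 : (2 : ℕ) < n := by omega
  have h3 : (3 : ℕ) < n := by omega
  have hinj : Function.Injective ![(⟨1, h1⟩ : Fin n), ⟨3, h3⟩, ⟨0, h0⟩, ⟨2, h2⟩] := by
    intro a b hab
    fin_cases a <;> fin_cases b <;> simp_all [Fin.ext_iff]
  refine ⟨⟨![⟨1, h1⟩, ⟨3, h3⟩, ⟨0, h0⟩, ⟨2, h2⟩], hinj⟩, ?_⟩
  · intro a b hab
    rw [hadj4] at hab
    rcases hab with ⟨rfl,rfl⟩|⟨rfl,rfl⟩|⟨rfl,rfl⟩|⟨rfl,rfl⟩|⟨rfl,rfl⟩|⟨rfl,rfl⟩ <;>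
      simp [cyc, SimpleGraph.fromRel_adj, Fin.ext_iff]

/-- The star graph on `Fin n` centered at `0`. -/
def star' (n : ℕ) : SimpleGraph (Fin n) :=
  SimpleGraph.fromRel (fun i _ => (i : ℕ) = 0)

lemma star'_degMS {n : ℕ} (hn : 4 ≤ n) [DecidableRel (star' n).Adj] :
    (Finset.univ.val.map (fun v => (star' n).degree v)) =
      (n - 1) ::ₘ Multiset.replicate (n - 1) 1 := by
  have h0 : (0 : ℕ) < n := by omega
  set z : Fin n := ⟨0, h0⟩ with hz
  have hdz : (star' n).degree z = n - 1 := by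
    have : (star' n).neighborFinset z = Finset.univ.erase z := by
      ext u
      rw [SimpleGraph.mem_neighborFinset]
      simp [star', hz, SimpleGraph.fromRel_adj, Fin.ext_iff, eq_comm]
    rw [← SimpleGraph.card_neighborFinset_eq_degree, this,
      Finset.card_erase_of_mem (Finset.mem_univ z)]
    simp
  have hdv : ∀ v : Fin n, v ≠ z → (star' n).degree v = 1 := by
    intro v hv
    have : (star' n).neighborFinset v = {z} := by
      ext u
      rw [SimpleGraph.mem_neighborFinset]
      simp only [star', hz, Fin.val_mk, SimpleGraph.fromRel_adj,
        Finset.mem_singleton, Fin.ext_iff, ne_eq]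
      have hv' : (v : ℕ) ≠ 0 := by simpa [Fin.ext_iff, hz] using hv
      constructor
      · rintro ⟨h1, h2⟩; omega
      · intro h; omega
    rw [← SimpleGraph.card_neighborFinset_eq_degree, this, Finset.card_singleton]
  have hmem : z ∈ (Finset.univ : Finset (Fin n)).val := Finset.mem_univ z
  have hsplit : (Finset.univ : Finset (Fin n)).val
      = z ::ₘ (Finset.univ : Finset (Fin n)).val.erase z :=
    (Multiset.cons_erase hmem).symm
  rw [hsplit, Multiset.map_cons, hdz]
  congr 1
  rw [Multiset.eq_replicate]
  constructor
  · rw [Multiset.card_map, Multiset.card_erase_of_mem hmem]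
    simp
  · intro b hb
    rcases Multiset.mem_map.1 hb with ⟨v, hv, rfl⟩
    have hvz : v ≠ z := (Multiset.Nodup.mem_erase_iff (Finset.univ.nodup)).1 hv |>.1
    exact hdv v hvz

end Aux

theorem stmt12 (n : ℕ) (hn : 4 ≤ n) :
    (∀ s : Multiset ℕ, s.card = n → (∃ G : SimpleGraph (Fin n), degMS G = s) →
      2 * n ≤ s.sum →
      ∃ G : SimpleGraph (Fin n), degMS G = s ∧ Contains G (KmPk 4 3)) ∧
    (∃ s : Multiset ℕ, s.card = n ∧ (∃ G : SimpleGraph (Fin n), degMS G = s) ∧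
      s.sum = 2 * n - 2 ∧
      ∀ G : SimpleGraph (Fin n), degMS G = s → ¬ Contains G (KmPk 4 3)) := by
  classical
  constructor
  · -- Part 1
    rintro s hcard ⟨G, hG⟩ hsum
    by_cases hc : Contains G (KmPk 4 3)
    · exact ⟨G, hG, hc⟩
    · -- G has no copy; then all degrees are 2 and the cycle realizes s
      have hdsum : s.sum = ∑ v : Fin n, G.degree v := by
        rw [← hG, degMS_eq]
        rfl
      have h2 : ∀ v : Fin n, G.degree v = 2 := all_deg_two hc (hdsum ▸ hsum)
      have hrep : s = Multiset.replicate n 2 := by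
        rw [← hG, degMS_eq]
        rw [Multiset.eq_replicate]
        constructor
        · simp
        · intro b hb
          rcases Multiset.mem_map.1 hb with ⟨v, _, rfl⟩
          exact h2 v
      refine ⟨cyc n, ?_, cyc_contains hn⟩
      rw [degMS_eq, hrep]
      rw [Multiset.eq_replicate]
      constructor
      · simp
      · intro b hb
        rcases Multiset.mem_map.1 hb with ⟨v, _, rfl⟩
        exact cyc_deg hn v
  · -- Part 2 : the star sequence
    refine ⟨(n - 1) ::ₘ Multiset.replicate (n - 1) 1, ?_, ⟨star' n, ?_⟩, ?_, ?_⟩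
    · simp; omega
    · rw [degMS_eq]; exact star'_degMS hn
    · simp [Multiset.sum_replicate]; omega
    · rintro G hG ⟨f, hf⟩
      -- f 0 and f 3 both have degree ≥ 2
      have hA02 : G.Adj (f 0) (f 2) := hf 0 2 (by rw [hadj4]; tauto)
      have hA03 : G.Adj (f 0) (f 3) := hf 0 3 (by rw [hadj4]; tauto)
      have hA13 : G.Adj (f 1) (f 3) := hf 1 3 (by rw [hadj4]; tauto)
      have hne03 : f 0 ≠ f 3 := fun h => by
        have := f.injective h; simp at this
      have hd0 : 2 ≤ G.degree (f 0) := by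
        rw [← SimpleGraph.card_neighborFinset_eq_degree]
        have hsub : ({f 2, f 3} : Finset (Fin n)) ⊆ G.neighborFinset (f 0) := by
          intro y hy
          rcases Finset.mem_insert.1 hy with rfl | hy
          · exact SimpleGraph.mem_neighborFinset _ _ _ |>.2 hA02
          · rw [Finset.mem_singleton] at hy; subst hy
            exact SimpleGraph.mem_neighborFinset _ _ _ |>.2 hA03
        have h23 : f 2 ≠ f 3 := fun h => by
          have := f.injective h; simp at this
        calc 2 = ({f 2, f 3} : Finset (Fin n)).card := (Finset.card_pair h23).symm
          _ ≤ _ := Finset.card_le_card hsub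
      have hd3 : 2 ≤ G.degree (f 3) := by
        rw [← SimpleGraph.card_neighborFinset_eq_degree]
        have hsub : ({f 0, f 1} : Finset (Fin n)) ⊆ G.neighborFinset (f 3) := by
          intro y hy
          rcases Finset.mem_insert.1 hy with rfl | hy
          · exact SimpleGraph.mem_neighborFinset _ _ _ |>.2 hA03.symm
          · rw [Finset.mem_singleton] at hy; subst hy
            exact SimpleGraph.mem_neighborFinset _ _ _ |>.2 hA13.symm
        have h01 : f 0 ≠ f 1 := fun h => by
          have := f.injective h; simp at this
        calc 2 = ({f 0, f 1} : Finset (Fin n)).card := (Finset.card_pair h01).symm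
          _ ≤ _ := Finset.card_le_card hsub
      -- count vertices of degree ≥ 2
      have hcnt2 : 2 ≤ (univ.filter (fun v => 2 ≤ G.degree v)).card := by
        have hsub : ({f 0, f 3} : Finset (Fin n)) ⊆ univ.filter (fun v => 2 ≤ G.degree v) := by
          intro y hy
          rcases Finset.mem_insert.1 hy with rfl | hy
          · exact Finset.mem_filter.2 ⟨Finset.mem_univ _, hd0⟩
          · rw [Finset.mem_singleton] at hy; subst hy
            exact Finset.mem_filter.2 ⟨Finset.mem_univ _, hd3⟩
        calc 2 = ({f 0, f 3} : Finset (Fin n)).card := (Finset.card_pair hne03).symm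
          _ ≤ _ := Finset.card_le_card hsub
      -- but the multiset s has only one entry ≥ 2
      have hcnt1 : (degMS G).countP (fun x => 2 ≤ x) = 1 := by
        rw [hG, Multiset.countP_cons, Multiset.countP_eq_zero.2 ?_]
        · simp; omega
        · intro a ha
          rw [Multiset.eq_of_mem_replicate ha]
          omega
      have heq : (degMS G).countP (fun x => 2 ≤ x)
          = (univ.filter (fun v => 2 ≤ G.degree v)).card := by
        rw [degMS_eq, Multiset.countP_map, Finset.card_filter, Finset.sum_boole, Nat.cast_id]
        rfl
      omega
end

section
/- If G is a simple graph on n ≥ 8 vertices with minimum degree at least 3 containing K_4 on vertices v1,v2,v3,v4, where v1 has a neighbor y1 ∉ {v2,v3,v4} nonadjacent to v2,v3,v4, v2 has a neighbor y2 ∉ {v1,v3,v4} nonadjacent to v1,v3,v4, and y1 has a neighbor y3 with y3 not adjacent to v1, then the graph G' obtained by deleting edges y1y3, v1v4, v2y2 and adding edges y1v2, y3v1, y2v4 is a simple graph with the same degree sequence as G and contains K_5 − P_3 as a subgraph. -/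
open SimpleGraph

set_option maxHeartbeats 1000000 in
private lemma card_swap {V : Type*} [Fintype V] (s : Set V) (a b : V)
    (ha : a ∈ s) (hb : b ∉ s) :
    Nat.card ↥(insert b (s \ {a})) = Nat.card ↥s := by
  rw [Nat.card_coe_set_eq, Nat.card_coe_set_eq,
    Set.ncard_insert_of_notMem (by simp [hb]) (Set.toFinite _),
    Set.ncard_diff_singleton_of_mem ha,
    Nat.sub_add_cancel ((Set.ncard_pos (Set.toFinite _)).2 ⟨a, ha⟩)]

set_option maxHeartbeats 1000000 in
theorem stmt13 {V : Type*} [Fintype V] (G : SimpleGraph V) (hn : 8 ≤ Fintype.card V)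
    (hmin : ∀ v : V, 3 ≤ Nat.card (G.neighborSet v))
    (v1 v2 v3 v4 y1 y2 y3 : V)
    (h12 : G.Adj v1 v2) (h13 : G.Adj v1 v3) (h14 : G.Adj v1 v4)
    (h23 : G.Adj v2 v3) (h24 : G.Adj v2 v4) (h34 : G.Adj v3 v4)
    (hy1 : G.Adj v1 y1) (hy1d : y1 ≠ v2 ∧ y1 ≠ v3 ∧ y1 ≠ v4)
    (hy1n : ¬ G.Adj y1 v2 ∧ ¬ G.Adj y1 v3 ∧ ¬ G.Adj y1 v4)
    (hy2 : G.Adj v2 y2) (hy2d : y2 ≠ v1 ∧ y2 ≠ v3 ∧ y2 ≠ v4)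
    (hy2n : ¬ G.Adj y2 v1 ∧ ¬ G.Adj y2 v3 ∧ ¬ G.Adj y2 v4)
    (hy3 : G.Adj y1 y3) (hy3n1 : ¬ G.Adj y3 v1)
    (hy3d : y3 ≠ v1 ∧ y3 ≠ v2 ∧ y3 ≠ v3 ∧ y3 ≠ v4)
    (hyd : y1 ≠ y2 ∧ y1 ≠ y3 ∧ y2 ≠ y3) :
    degMS ((G \ SimpleGraph.fromEdgeSet {s(y1, y3), s(v1, v4), s(v2, y2)}) ⊔
        SimpleGraph.fromEdgeSet {s(y1, v2), s(y3, v1), s(y2, v4)}) = degMS G ∧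
    Contains ((G \ SimpleGraph.fromEdgeSet {s(y1, y3), s(v1, v4), s(v2, y2)}) ⊔
        SimpleGraph.fromEdgeSet {s(y1, v2), s(y3, v1), s(y2, v4)}) (KmPk 5 3) := by
  obtain ⟨n12, n13, n14⟩ := hy1d
  obtain ⟨hn12, hn13, hn14⟩ := hy1n
  obtain ⟨m21, m23, m24⟩ := hy2d
  obtain ⟨hm21, hm23, hm24⟩ := hy2n
  obtain ⟨p31, p32, p33, p34⟩ := hy3d
  obtain ⟨q12, q13, q23⟩ := hyd
  have e12 := h12.ne
  have e13 := h13.ne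
  have e14 := h14.ne
  have e23 := h23.ne
  have e24 := h24.ne
  have e34 := h34.ne
  have ey1 : v1 ≠ y1 := hy1.ne
  have ey2 : v2 ≠ y2 := hy2.ne
  have ey3 : y1 ≠ y3 := hy3.ne
  set G' := (G \ SimpleGraph.fromEdgeSet {s(y1, y3), s(v1, v4), s(v2, y2)}) ⊔
        SimpleGraph.fromEdgeSet {s(y1, v2), s(y3, v1), s(y2, v4)} with hG'
  have hadj : ∀ a b : V, G'.Adj a b ↔
      (G.Adj a b ∧ ¬(s(a,b) = s(y1,y3) ∨ s(a,b) = s(v1,v4) ∨ s(a,b) = s(v2,y2))) ∨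
      ((s(a,b) = s(y1,v2) ∨ s(a,b) = s(y3,v1) ∨ s(a,b) = s(y2,v4)) ∧ a ≠ b) := by
    intro a b
    simp only [hG', SimpleGraph.sup_adj, SimpleGraph.sdiff_adj,
      SimpleGraph.fromEdgeSet_adj, Set.mem_insert_iff, Set.mem_singleton_iff]
    constructor
    · rintro (⟨h, h2⟩ | ⟨h, h2⟩)
      · exact Or.inl ⟨h, fun hc => h2 ⟨hc, h.ne⟩⟩
      · exact Or.inr ⟨h, h2⟩
    · rintro (⟨h, h2⟩ | ⟨h, h2⟩)
      · exact Or.inl ⟨h, fun hc => h2 hc.1⟩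
      · exact Or.inr ⟨h, h2⟩
  constructor
  · unfold degMS
    refine Multiset.map_congr rfl ?_
    intro v _
    by_cases hv1' : v = v1
    · rw [hv1']
      have hs : G'.neighborSet v1 = insert y3 (G.neighborSet v1 \ {v4}) := by
        ext w
        simp only [SimpleGraph.mem_neighborSet, hadj, Sym2.eq_iff, Set.mem_insert_iff,
          Set.mem_diff, Set.mem_singleton_iff]
        clear hadj hG' hmin hn
        constructor
        · rintro (⟨h, h2⟩ | ⟨h, h2⟩)
          · exact Or.inr ⟨h, fun hw => h2 (by subst hw; simp)⟩
          · rcases h with (⟨h3,h4⟩|⟨h3,h4⟩)|(⟨h3,h4⟩|⟨h3,h4⟩)|(⟨h3,h4⟩|⟨h3,h4⟩) <;>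
              subst h4 <;> simp_all
        · rintro (hw | ⟨h, h2⟩)
          · subst hw
            exact Or.inr ⟨by simp, p31.symm⟩
          · refine Or.inl ⟨h, ?_⟩
            rintro ((⟨h3,h4⟩|⟨h3,h4⟩)|(⟨h3,h4⟩|⟨h3,h4⟩)|(⟨h3,h4⟩|⟨h3,h4⟩)) <;>
              subst h4 <;> simp_all
      rw [hs]
      exact card_swap _ _ _ (by simpa using h14) (by simpa using fun h => hy3n1 (G.adj_symm h))
    by_cases hv2' : v = v2
    · rw [hv2']
      have hs : G'.neighborSet v2 = insert y1 (G.neighborSet v2 \ {y2}) := by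
        ext w
        simp only [SimpleGraph.mem_neighborSet, hadj, Sym2.eq_iff, Set.mem_insert_iff,
          Set.mem_diff, Set.mem_singleton_iff]
        clear hadj hG' hmin hn
        constructor
        · rintro (⟨h, h2⟩ | ⟨h, h2⟩)
          · exact Or.inr ⟨h, fun hw => h2 (by subst hw; simp)⟩
          · rcases h with (⟨h3,h4⟩|⟨h3,h4⟩)|(⟨h3,h4⟩|⟨h3,h4⟩)|(⟨h3,h4⟩|⟨h3,h4⟩) <;>
              subst h4 <;> simp_all
        · rintro (hw | ⟨h, h2⟩)
          · subst hw
            exact Or.inr ⟨by simp, n12.symm⟩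
          · refine Or.inl ⟨h, ?_⟩
            rintro ((⟨h3,h4⟩|⟨h3,h4⟩)|(⟨h3,h4⟩|⟨h3,h4⟩)|(⟨h3,h4⟩|⟨h3,h4⟩)) <;>
              subst h4 <;> simp_all
      rw [hs]
      exact card_swap _ _ _ (by simpa using hy2) (by simpa using fun h => hn12 (G.adj_symm h))
    by_cases hv4' : v = v4
    · rw [hv4']
      have hs : G'.neighborSet v4 = insert y2 (G.neighborSet v4 \ {v1}) := by
        ext w
        simp only [SimpleGraph.mem_neighborSet, hadj, Sym2.eq_iff, Set.mem_insert_iff,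
          Set.mem_diff, Set.mem_singleton_iff]
        clear hadj hG' hmin hn
        constructor
        · rintro (⟨h, h2⟩ | ⟨h, h2⟩)
          · exact Or.inr ⟨h, fun hw => h2 (by subst hw; simp)⟩
          · rcases h with (⟨h3,h4⟩|⟨h3,h4⟩)|(⟨h3,h4⟩|⟨h3,h4⟩)|(⟨h3,h4⟩|⟨h3,h4⟩) <;>
              subst h4 <;> simp_all
        · rintro (hw | ⟨h, h2⟩)
          · subst hw
            exact Or.inr ⟨by simp, m24.symm⟩
          · refine Or.inl ⟨h, ?_⟩
            rintro ((⟨h3,h4⟩|⟨h3,h4⟩)|(⟨h3,h4⟩|⟨h3,h4⟩)|(⟨h3,h4⟩|⟨h3,h4⟩)) <;>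
              subst h4 <;> simp_all
      rw [hs]
      exact card_swap _ _ _ (by simpa using h14.symm) (by simpa using fun h => hm24 (G.adj_symm h))
    by_cases hy1' : v = y1
    · rw [hy1']
      have hs : G'.neighborSet y1 = insert v2 (G.neighborSet y1 \ {y3}) := by
        ext w
        simp only [SimpleGraph.mem_neighborSet, hadj, Sym2.eq_iff, Set.mem_insert_iff,
          Set.mem_diff, Set.mem_singleton_iff]
        clear hadj hG' hmin hn
        constructor
        · rintro (⟨h, h2⟩ | ⟨h, h2⟩)
          · exact Or.inr ⟨h, fun hw => h2 (by subst hw; simp)⟩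
          · rcases h with (⟨h3,h4⟩|⟨h3,h4⟩)|(⟨h3,h4⟩|⟨h3,h4⟩)|(⟨h3,h4⟩|⟨h3,h4⟩) <;>
              subst h4 <;> simp_all
        · rintro (hw | ⟨h, h2⟩)
          · subst hw
            exact Or.inr ⟨by simp, n12⟩
          · refine Or.inl ⟨h, ?_⟩
            rintro ((⟨h3,h4⟩|⟨h3,h4⟩)|(⟨h3,h4⟩|⟨h3,h4⟩)|(⟨h3,h4⟩|⟨h3,h4⟩)) <;>
              subst h4 <;> simp_all
      rw [hs]
      exact card_swap _ _ _ (by simpa using hy3) (by simpa using hn12)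
    by_cases hy2' : v = y2
    · rw [hy2']
      have hs : G'.neighborSet y2 = insert v4 (G.neighborSet y2 \ {v2}) := by
        ext w
        simp only [SimpleGraph.mem_neighborSet, hadj, Sym2.eq_iff, Set.mem_insert_iff,
          Set.mem_diff, Set.mem_singleton_iff]
        clear hadj hG' hmin hn
        constructor
        · rintro (⟨h, h2⟩ | ⟨h, h2⟩)
          · exact Or.inr ⟨h, fun hw => h2 (by subst hw; simp)⟩
          · rcases h with (⟨h3,h4⟩|⟨h3,h4⟩)|(⟨h3,h4⟩|⟨h3,h4⟩)|(⟨h3,h4⟩|⟨h3,h4⟩) <;>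
              subst h4 <;> simp_all
        · rintro (hw | ⟨h, h2⟩)
          · subst hw
            exact Or.inr ⟨by simp, m24⟩
          · refine Or.inl ⟨h, ?_⟩
            rintro ((⟨h3,h4⟩|⟨h3,h4⟩)|(⟨h3,h4⟩|⟨h3,h4⟩)|(⟨h3,h4⟩|⟨h3,h4⟩)) <;>
              subst h4 <;> simp_all
      rw [hs]
      exact card_swap _ _ _ (by simpa using hy2.symm) (by simpa using hm24)
    by_cases hy3' : v = y3
    · rw [hy3']
      have hs : G'.neighborSet y3 = insert v1 (G.neighborSet y3 \ {y1}) := by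
        ext w
        simp only [SimpleGraph.mem_neighborSet, hadj, Sym2.eq_iff, Set.mem_insert_iff,
          Set.mem_diff, Set.mem_singleton_iff]
        clear hadj hG' hmin hn
        constructor
        · rintro (⟨h, h2⟩ | ⟨h, h2⟩)
          · exact Or.inr ⟨h, fun hw => h2 (by subst hw; simp)⟩
          · rcases h with (⟨h3,h4⟩|⟨h3,h4⟩)|(⟨h3,h4⟩|⟨h3,h4⟩)|(⟨h3,h4⟩|⟨h3,h4⟩) <;>
              subst h4 <;> simp_all
        · rintro (hw | ⟨h, h2⟩)
          · subst hw
            exact Or.inr ⟨by simp, p31⟩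
          · refine Or.inl ⟨h, ?_⟩
            rintro ((⟨h3,h4⟩|⟨h3,h4⟩)|(⟨h3,h4⟩|⟨h3,h4⟩)|(⟨h3,h4⟩|⟨h3,h4⟩)) <;>
              subst h4 <;> simp_all
      rw [hs]
      exact card_swap _ _ _ (by simpa using hy3.symm) (by simpa using hy3n1)
    have hs : G'.neighborSet v = G.neighborSet v := by
      ext w
      simp only [SimpleGraph.mem_neighborSet, hadj, Sym2.eq_iff]
      clear hadj hG' hmin hn
      constructor
      · rintro (⟨h, h2⟩ | ⟨h, h2⟩)
        · exact h
        · rcases h with (⟨h3,h4⟩|⟨h3,h4⟩)|(⟨h3,h4⟩|⟨h3,h4⟩)|(⟨h3,h4⟩|⟨h3,h4⟩) <;> simp_all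
      · intro h
        refine Or.inl ⟨h, ?_⟩
        rintro ((⟨h3,h4⟩|⟨h3,h4⟩)|(⟨h3,h4⟩|⟨h3,h4⟩)|(⟨h3,h4⟩|⟨h3,h4⟩)) <;> simp_all
    rw [hs]
  · -- containment of K_5 - P_3
    have hne1 : ∀ {a b c d : V}, a ≠ c → a ≠ d → s(a,b) ≠ s(c,d) := by
      intro a b c d h1 h2 hc
      rw [Sym2.eq_iff] at hc
      tauto
    have hne2 : ∀ {a b c d : V}, b ≠ c → b ≠ d → s(a,b) ≠ s(c,d) := by
      intro a b c d h1 h2 hc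
      rw [Sym2.eq_iff] at hc
      tauto
    have E02 : G'.Adj v1 y1 := (hadj _ _).2 (Or.inl ⟨hy1, by
      simp only [not_or]; exact ⟨hne1 ey1 p31.symm, hne2 ey1.symm n14, hne1 e12 m21.symm⟩⟩)
    have E03 : G'.Adj v1 v3 := (hadj _ _).2 (Or.inl ⟨h13, by
      simp only [not_or]; exact ⟨hne1 ey1 p31.symm, hne2 e13.symm e34, hne1 e12 m21.symm⟩⟩)
    have E04 : G'.Adj v1 v2 := (hadj _ _).2 (Or.inl ⟨h12, by
      simp only [not_or]; exact ⟨hne1 ey1 p31.symm, hne2 e12.symm e24, hne1 e12 m21.symm⟩⟩)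
    have E13 : G'.Adj v4 v3 := (hadj _ _).2 (Or.inl ⟨h34.symm, by
      simp only [not_or]; exact ⟨hne1 n14.symm p34.symm, hne2 e13.symm e34, hne1 e24.symm m24.symm⟩⟩)
    have E14 : G'.Adj v4 v2 := (hadj _ _).2 (Or.inl ⟨h24.symm, by
      simp only [not_or]; exact ⟨hne1 n14.symm p34.symm, hne2 e12.symm e24, hne1 e24.symm m24.symm⟩⟩)
    have E24 : G'.Adj y1 v2 := (hadj _ _).2 (Or.inr ⟨Or.inl rfl, n12⟩)
    have E34 : G'.Adj v3 v2 := (hadj _ _).2 (Or.inl ⟨h23.symm, by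
      simp only [not_or]; exact ⟨hne1 n13.symm p33.symm, hne1 e13.symm e34, hne1 e23.symm m23.symm⟩⟩)
    have hinj : Function.Injective ![v1, v4, y1, v3, v2] := by
      intro a b hab
      fin_cases a <;> fin_cases b <;> simp at hab ⊢ <;>
        first | exact absurd hab ‹_› | exact absurd hab.symm ‹_›
    have hK : ∀ a b : Fin 5, (KmPk 5 3).Adj a b →
        (a ≠ b ∧ ¬((a:ℕ)+1 = (b:ℕ) ∧ (b:ℕ) ≤ 3) ∧ ¬((b:ℕ)+1 = (a:ℕ) ∧ (a:ℕ) ≤ 3)) := by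
      intro a b hab
      simp only [KmPk, SimpleGraph.sdiff_adj, SimpleGraph.top_adj,
        SimpleGraph.fromRel_adj] at hab
      tauto
    refine ⟨⟨![v1, v4, y1, v3, v2], hinj⟩, ?_⟩
    intro a b hab
    replace hab := hK a b hab
    fin_cases a <;> fin_cases b <;>
      first
        | exact absurd hab (by decide)
        | exact E02 | exact E02.symm | exact E03 | exact E03.symm
        | exact E04 | exact E04.symm | exact E13 | exact E13.symm
        | exact E14 | exact E14.symm | exact E24 | exact E24.symm
        | exact E34 | exact E34.symm
end

section
/- If G is a simple graph containing K_4 on vertices v1,v2,v3,v4, with y1 a neighbor of v1 outside the K_4 nonadjacent to v2,v3,v4, y2 a neighbor of v2 outside nonadjacent to v1,v3,v4, and y3 a neighbor of y1 with y3 adjacent to v1 but not adjacent to any of v2,v3,v4, then the graph obtained by removing edges y1y3, v1v4, v2y2 and adding edges y1v2, y3v4, y2v1 has the same degree sequence as G and contains K_5 − P_3 as a subgraph. -/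
set_option maxHeartbeats 1000000

open SimpleGraph

instance : DecidableRel (KmPk 5 3).Adj := fun a b =>
  decidable_of_iff (a ≠ b ∧ ¬(a ≠ b ∧ (((a : ℕ) + 1 = (b : ℕ) ∧ (b : ℕ) ≤ 3) ∨
    ((b : ℕ) + 1 = (a : ℕ) ∧ (a : ℕ) ≤ 3)))) Iff.rfl

theorem stmt14 {V : Type*} [Fintype V] (G : SimpleGraph V)
    (v1 v2 v3 v4 y1 y2 y3 : V)
    (h12 : G.Adj v1 v2) (h13 : G.Adj v1 v3) (h14 : G.Adj v1 v4)
    (h23 : G.Adj v2 v3) (h24 : G.Adj v2 v4) (h34 : G.Adj v3 v4)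
    (hy1 : G.Adj v1 y1) (hy1d : y1 ≠ v2 ∧ y1 ≠ v3 ∧ y1 ≠ v4)
    (hy1n : ¬ G.Adj y1 v2 ∧ ¬ G.Adj y1 v3 ∧ ¬ G.Adj y1 v4)
    (hy2 : G.Adj v2 y2) (hy2d : y2 ≠ v1 ∧ y2 ≠ v3 ∧ y2 ≠ v4)
    (hy2n : ¬ G.Adj y2 v1 ∧ ¬ G.Adj y2 v3 ∧ ¬ G.Adj y2 v4)
    (hy3 : G.Adj y1 y3) (hy3v1 : G.Adj y3 v1)
    (hy3n : ¬ G.Adj y3 v2 ∧ ¬ G.Adj y3 v3 ∧ ¬ G.Adj y3 v4)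
    (hy3d : y3 ≠ v2 ∧ y3 ≠ v3 ∧ y3 ≠ v4)
    (hyd : y1 ≠ y2 ∧ y1 ≠ y3 ∧ y2 ≠ y3) :
    degMS ((G \ SimpleGraph.fromEdgeSet {s(y1, y3), s(v1, v4), s(v2, y2)}) ⊔
        SimpleGraph.fromEdgeSet {s(y1, v2), s(y3, v4), s(y2, v1)}) = degMS G ∧
    Contains ((G \ SimpleGraph.fromEdgeSet {s(y1, y3), s(v1, v4), s(v2, y2)}) ⊔
        SimpleGraph.fromEdgeSet {s(y1, v2), s(y3, v4), s(y2, v1)}) (KmPk 5 3) := by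
  obtain ⟨hy1v2, hy1v3, hy1v4⟩ := hy1d
  obtain ⟨ny1v2, ny1v3, ny1v4⟩ := hy1n
  obtain ⟨hy2v1, hy2v3, hy2v4⟩ := hy2d
  obtain ⟨ny2v1, ny2v3, ny2v4⟩ := hy2n
  obtain ⟨ny3v2, ny3v3, ny3v4⟩ := hy3n
  obtain ⟨hy3v2, hy3v3, hy3v4⟩ := hy3d
  obtain ⟨hy1y2, hy1y3, hy2y3⟩ := hyd
  have n12 : v1 ≠ v2 := h12.ne
  have n13 : v1 ≠ v3 := h13.ne
  have n14 : v1 ≠ v4 := h14.ne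
  have n23 : v2 ≠ v3 := h23.ne
  have n24 : v2 ≠ v4 := h24.ne
  have n34 : v3 ≠ v4 := h34.ne
  have n1y1 : v1 ≠ y1 := hy1.ne
  have n2y2 : v2 ≠ y2 := hy2.ne
  have n1y3 : v1 ≠ y3 := hy3v1.ne.symm
  have s12 : v2 ≠ v1 := n12.symm
  have s13 : v3 ≠ v1 := n13.symm
  have s14 : v4 ≠ v1 := n14.symm
  have s23 : v3 ≠ v2 := n23.symm
  have s24 : v4 ≠ v2 := n24.symm
  have s34 : v4 ≠ v3 := n34.symm
  have s1y1 : y1 ≠ v1 := n1y1.symm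
  have s2y2 : y2 ≠ v2 := n2y2.symm
  have s1y3 : y3 ≠ v1 := n1y3.symm
  have sy1v2 : v2 ≠ y1 := hy1v2.symm
  have sy1v3 : v3 ≠ y1 := hy1v3.symm
  have sy1v4 : v4 ≠ y1 := hy1v4.symm
  have sy2v1 : v1 ≠ y2 := hy2v1.symm
  have sy2v3 : v3 ≠ y2 := hy2v3.symm
  have sy2v4 : v4 ≠ y2 := hy2v4.symm
  have sy3v2 : v2 ≠ y3 := hy3v2.symm
  have sy3v3 : v3 ≠ y3 := hy3v3.symm
  have sy3v4 : v4 ≠ y3 := hy3v4.symm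
  have sy1y2 : y2 ≠ y1 := hy1y2.symm
  have sy1y3 : y3 ≠ y1 := hy1y3.symm
  have sy2y3 : y3 ≠ y2 := hy2y3.symm
  have m41 : G.Adj v4 v1 := h14.symm
  have my2v2 : G.Adj y2 v2 := hy2.symm
  have my3y1 : G.Adj y3 y1 := hy3.symm
  have nA1y2 : ¬ G.Adj v1 y2 := fun h => ny2v1 h.symm
  have nA2y1 : ¬ G.Adj v2 y1 := fun h => ny1v2 h.symm
  have nA4y3 : ¬ G.Adj v4 y3 := fun h => ny3v4 h.symm
  set G' := (G \ SimpleGraph.fromEdgeSet {s(y1, y3), s(v1, v4), s(v2, y2)}) ⊔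
        SimpleGraph.fromEdgeSet {s(y1, v2), s(y3, v4), s(y2, v1)} with hG'
  have k1 : Nat.card (G'.neighborSet v1) = Nat.card (G.neighborSet v1) := by
    have hset : G'.neighborSet v1 = insert y2 (G.neighborSet v1 \ {v4}) := by
      ext x
      simp only [hG', mem_neighborSet, sup_adj, sdiff_adj, fromEdgeSet_adj,
        Set.mem_insert_iff, Set.mem_singleton_iff, Sym2.eq, Sym2.rel_iff',
        Prod.mk.injEq, Prod.swap_prod_mk, Set.mem_diff]
      constructor
      · rintro (⟨hA, hne⟩ | ⟨h, hxy⟩)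
        · by_cases hxb : x = v4
          · exact absurd ⟨Or.inr (Or.inl (Or.inl ⟨trivial, hxb⟩)), hA.ne⟩ hne
          · exact Or.inr ⟨hA, hxb⟩
        · rcases h with (⟨e1,e2⟩|⟨e1,e2⟩)|(⟨e1,e2⟩|⟨e1,e2⟩)|(⟨e1,e2⟩|⟨e1,e2⟩) <;> subst e2 <;>
            first | contradiction | exact Or.inl rfl
      · rintro (rfl | ⟨hA, hx⟩)
        · exact Or.inr ⟨Or.inr (Or.inr (Or.inr ⟨trivial, rfl⟩)), sy2v1⟩
        · refine Or.inl ⟨hA, ?_⟩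
          rintro ⟨((⟨e1,e2⟩|⟨e1,e2⟩)|(⟨e1,e2⟩|⟨e1,e2⟩)|(⟨e1,e2⟩|⟨e1,e2⟩)), -⟩ <;> subst e2 <;> contradiction
    rw [Nat.card_coe_set_eq, Nat.card_coe_set_eq, hset]
    exact Set.ncard_exchange (s := G.neighborSet v1) nA1y2 h14
  have k2 : Nat.card (G'.neighborSet v2) = Nat.card (G.neighborSet v2) := by
    have hset : G'.neighborSet v2 = insert y1 (G.neighborSet v2 \ {y2}) := by
      ext x
      simp only [hG', mem_neighborSet, sup_adj, sdiff_adj, fromEdgeSet_adj,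
        Set.mem_insert_iff, Set.mem_singleton_iff, Sym2.eq, Sym2.rel_iff',
        Prod.mk.injEq, Prod.swap_prod_mk, Set.mem_diff]
      constructor
      · rintro (⟨hA, hne⟩ | ⟨h, hxy⟩)
        · by_cases hxb : x = y2
          · exact absurd ⟨Or.inr (Or.inr (Or.inl ⟨trivial, hxb⟩)), hA.ne⟩ hne
          · exact Or.inr ⟨hA, hxb⟩
        · rcases h with (⟨e1,e2⟩|⟨e1,e2⟩)|(⟨e1,e2⟩|⟨e1,e2⟩)|(⟨e1,e2⟩|⟨e1,e2⟩) <;> subst e2 <;>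
            first | contradiction | exact Or.inl rfl
      · rintro (rfl | ⟨hA, hx⟩)
        · exact Or.inr ⟨Or.inl (Or.inr ⟨trivial, rfl⟩), sy1v2⟩
        · refine Or.inl ⟨hA, ?_⟩
          rintro ⟨((⟨e1,e2⟩|⟨e1,e2⟩)|(⟨e1,e2⟩|⟨e1,e2⟩)|(⟨e1,e2⟩|⟨e1,e2⟩)), -⟩ <;> subst e2 <;> contradiction
    rw [Nat.card_coe_set_eq, Nat.card_coe_set_eq, hset]
    exact Set.ncard_exchange (s := G.neighborSet v2) nA2y1 hy2
  have k4 : Nat.card (G'.neighborSet v4) = Nat.card (G.neighborSet v4) := by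
    have hset : G'.neighborSet v4 = insert y3 (G.neighborSet v4 \ {v1}) := by
      ext x
      simp only [hG', mem_neighborSet, sup_adj, sdiff_adj, fromEdgeSet_adj,
        Set.mem_insert_iff, Set.mem_singleton_iff, Sym2.eq, Sym2.rel_iff',
        Prod.mk.injEq, Prod.swap_prod_mk, Set.mem_diff]
      constructor
      · rintro (⟨hA, hne⟩ | ⟨h, hxy⟩)
        · by_cases hxb : x = v1
          · exact absurd ⟨Or.inr (Or.inl (Or.inr ⟨trivial, hxb⟩)), hA.ne⟩ hne
          · exact Or.inr ⟨hA, hxb⟩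
        · rcases h with (⟨e1,e2⟩|⟨e1,e2⟩)|(⟨e1,e2⟩|⟨e1,e2⟩)|(⟨e1,e2⟩|⟨e1,e2⟩) <;> subst e2 <;>
            first | contradiction | exact Or.inl rfl
      · rintro (rfl | ⟨hA, hx⟩)
        · exact Or.inr ⟨Or.inr (Or.inl (Or.inr ⟨trivial, rfl⟩)), sy3v4⟩
        · refine Or.inl ⟨hA, ?_⟩
          rintro ⟨((⟨e1,e2⟩|⟨e1,e2⟩)|(⟨e1,e2⟩|⟨e1,e2⟩)|(⟨e1,e2⟩|⟨e1,e2⟩)), -⟩ <;> subst e2 <;> contradiction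
    rw [Nat.card_coe_set_eq, Nat.card_coe_set_eq, hset]
    exact Set.ncard_exchange (s := G.neighborSet v4) nA4y3 m41
  have k5 : Nat.card (G'.neighborSet y1) = Nat.card (G.neighborSet y1) := by
    have hset : G'.neighborSet y1 = insert v2 (G.neighborSet y1 \ {y3}) := by
      ext x
      simp only [hG', mem_neighborSet, sup_adj, sdiff_adj, fromEdgeSet_adj,
        Set.mem_insert_iff, Set.mem_singleton_iff, Sym2.eq, Sym2.rel_iff',
        Prod.mk.injEq, Prod.swap_prod_mk, Set.mem_diff]
      constructor
      · rintro (⟨hA, hne⟩ | ⟨h, hxy⟩)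
        · by_cases hxb : x = y3
          · exact absurd ⟨Or.inl (Or.inl ⟨trivial, hxb⟩), hA.ne⟩ hne
          · exact Or.inr ⟨hA, hxb⟩
        · rcases h with (⟨e1,e2⟩|⟨e1,e2⟩)|(⟨e1,e2⟩|⟨e1,e2⟩)|(⟨e1,e2⟩|⟨e1,e2⟩) <;> subst e2 <;>
            first | contradiction | exact Or.inl rfl
      · rintro (rfl | ⟨hA, hx⟩)
        · exact Or.inr ⟨Or.inl (Or.inl ⟨trivial, rfl⟩), hy1v2⟩
        · refine Or.inl ⟨hA, ?_⟩
          rintro ⟨((⟨e1,e2⟩|⟨e1,e2⟩)|(⟨e1,e2⟩|⟨e1,e2⟩)|(⟨e1,e2⟩|⟨e1,e2⟩)), -⟩ <;> subst e2 <;> contradiction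
    rw [Nat.card_coe_set_eq, Nat.card_coe_set_eq, hset]
    exact Set.ncard_exchange (s := G.neighborSet y1) ny1v2 hy3
  have k6 : Nat.card (G'.neighborSet y2) = Nat.card (G.neighborSet y2) := by
    have hset : G'.neighborSet y2 = insert v1 (G.neighborSet y2 \ {v2}) := by
      ext x
      simp only [hG', mem_neighborSet, sup_adj, sdiff_adj, fromEdgeSet_adj,
        Set.mem_insert_iff, Set.mem_singleton_iff, Sym2.eq, Sym2.rel_iff',
        Prod.mk.injEq, Prod.swap_prod_mk, Set.mem_diff]
      constructor
      · rintro (⟨hA, hne⟩ | ⟨h, hxy⟩)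
        · by_cases hxb : x = v2
          · exact absurd ⟨Or.inr (Or.inr (Or.inr ⟨trivial, hxb⟩)), hA.ne⟩ hne
          · exact Or.inr ⟨hA, hxb⟩
        · rcases h with (⟨e1,e2⟩|⟨e1,e2⟩)|(⟨e1,e2⟩|⟨e1,e2⟩)|(⟨e1,e2⟩|⟨e1,e2⟩) <;> subst e2 <;>
            first | contradiction | exact Or.inl rfl
      · rintro (rfl | ⟨hA, hx⟩)
        · exact Or.inr ⟨Or.inr (Or.inr (Or.inl ⟨trivial, rfl⟩)), hy2v1⟩
        · refine Or.inl ⟨hA, ?_⟩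
          rintro ⟨((⟨e1,e2⟩|⟨e1,e2⟩)|(⟨e1,e2⟩|⟨e1,e2⟩)|(⟨e1,e2⟩|⟨e1,e2⟩)), -⟩ <;> subst e2 <;> contradiction
    rw [Nat.card_coe_set_eq, Nat.card_coe_set_eq, hset]
    exact Set.ncard_exchange (s := G.neighborSet y2) ny2v1 my2v2
  have k7 : Nat.card (G'.neighborSet y3) = Nat.card (G.neighborSet y3) := by
    have hset : G'.neighborSet y3 = insert v4 (G.neighborSet y3 \ {y1}) := by
      ext x
      simp only [hG', mem_neighborSet, sup_adj, sdiff_adj, fromEdgeSet_adj,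
        Set.mem_insert_iff, Set.mem_singleton_iff, Sym2.eq, Sym2.rel_iff',
        Prod.mk.injEq, Prod.swap_prod_mk, Set.mem_diff]
      constructor
      · rintro (⟨hA, hne⟩ | ⟨h, hxy⟩)
        · by_cases hxb : x = y1
          · exact absurd ⟨Or.inl (Or.inr ⟨trivial, hxb⟩), hA.ne⟩ hne
          · exact Or.inr ⟨hA, hxb⟩
        · rcases h with (⟨e1,e2⟩|⟨e1,e2⟩)|(⟨e1,e2⟩|⟨e1,e2⟩)|(⟨e1,e2⟩|⟨e1,e2⟩) <;> subst e2 <;>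
            first | contradiction | exact Or.inl rfl
      · rintro (rfl | ⟨hA, hx⟩)
        · exact Or.inr ⟨Or.inr (Or.inl (Or.inl ⟨trivial, rfl⟩)), hy3v4⟩
        · refine Or.inl ⟨hA, ?_⟩
          rintro ⟨((⟨e1,e2⟩|⟨e1,e2⟩)|(⟨e1,e2⟩|⟨e1,e2⟩)|(⟨e1,e2⟩|⟨e1,e2⟩)), -⟩ <;> subst e2 <;> contradiction
    rw [Nat.card_coe_set_eq, Nat.card_coe_set_eq, hset]
    exact Set.ncard_exchange (s := G.neighborSet y3) ny3v4 my3y1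
  have key : ∀ v, Nat.card (G'.neighborSet v) = Nat.card (G.neighborSet v) := by
    intro v
    by_cases e1 : v = v1; · rw [e1]; exact k1
    by_cases e2 : v = v2; · rw [e2]; exact k2
    by_cases e4 : v = v4; · rw [e4]; exact k4
    by_cases e5 : v = y1; · rw [e5]; exact k5
    by_cases e6 : v = y2; · rw [e6]; exact k6
    by_cases e7 : v = y3; · rw [e7]; exact k7
    have hset : G'.neighborSet v = G.neighborSet v := by
      ext x
      simp only [hG', mem_neighborSet, sup_adj, sdiff_adj, fromEdgeSet_adj,
        Set.mem_insert_iff, Set.mem_singleton_iff, Sym2.eq, Sym2.rel_iff',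
        Prod.mk.injEq, Prod.swap_prod_mk]
      constructor
      · rintro (⟨hA, -⟩ | ⟨h, -⟩)
        · exact hA
        · rcases h with (⟨q1,q2⟩|⟨q1,q2⟩)|(⟨q1,q2⟩|⟨q1,q2⟩)|(⟨q1,q2⟩|⟨q1,q2⟩) <;> contradiction
      · intro hA
        refine Or.inl ⟨hA, ?_⟩
        rintro ⟨((⟨q1,q2⟩|⟨q1,q2⟩)|(⟨q1,q2⟩|⟨q1,q2⟩)|(⟨q1,q2⟩|⟨q1,q2⟩)), -⟩ <;> contradiction
    rw [hset]
  constructor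
  · unfold degMS
    exact Multiset.map_congr rfl (fun v _ => key v)
  ·
    have A12 : G'.Adj v1 v2 := by
      simp only [hG', sup_adj, sdiff_adj]
      refine Or.inl ⟨h12, ?_⟩
      simp only [fromEdgeSet_adj, Set.mem_insert_iff, Set.mem_singleton_iff, Sym2.eq,
        Sym2.rel_iff', Prod.mk.injEq, Prod.swap_prod_mk]
      rintro ⟨((⟨e1,e2⟩|⟨e1,e2⟩)|(⟨e1,e2⟩|⟨e1,e2⟩)|(⟨e1,e2⟩|⟨e1,e2⟩)), -⟩ <;> contradiction
    have A13 : G'.Adj v1 v3 := by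
      simp only [hG', sup_adj, sdiff_adj]
      refine Or.inl ⟨h13, ?_⟩
      simp only [fromEdgeSet_adj, Set.mem_insert_iff, Set.mem_singleton_iff, Sym2.eq,
        Sym2.rel_iff', Prod.mk.injEq, Prod.swap_prod_mk]
      rintro ⟨((⟨e1,e2⟩|⟨e1,e2⟩)|(⟨e1,e2⟩|⟨e1,e2⟩)|(⟨e1,e2⟩|⟨e1,e2⟩)), -⟩ <;> contradiction
    have A1y1 : G'.Adj v1 y1 := by
      simp only [hG', sup_adj, sdiff_adj]
      refine Or.inl ⟨hy1, ?_⟩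
      simp only [fromEdgeSet_adj, Set.mem_insert_iff, Set.mem_singleton_iff, Sym2.eq,
        Sym2.rel_iff', Prod.mk.injEq, Prod.swap_prod_mk]
      rintro ⟨((⟨e1,e2⟩|⟨e1,e2⟩)|(⟨e1,e2⟩|⟨e1,e2⟩)|(⟨e1,e2⟩|⟨e1,e2⟩)), -⟩ <;> contradiction
    have A23 : G'.Adj v2 v3 := by
      simp only [hG', sup_adj, sdiff_adj]
      refine Or.inl ⟨h23, ?_⟩
      simp only [fromEdgeSet_adj, Set.mem_insert_iff, Set.mem_singleton_iff, Sym2.eq,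
        Sym2.rel_iff', Prod.mk.injEq, Prod.swap_prod_mk]
      rintro ⟨((⟨e1,e2⟩|⟨e1,e2⟩)|(⟨e1,e2⟩|⟨e1,e2⟩)|(⟨e1,e2⟩|⟨e1,e2⟩)), -⟩ <;> contradiction
    have A24 : G'.Adj v2 v4 := by
      simp only [hG', sup_adj, sdiff_adj]
      refine Or.inl ⟨h24, ?_⟩
      simp only [fromEdgeSet_adj, Set.mem_insert_iff, Set.mem_singleton_iff, Sym2.eq,
        Sym2.rel_iff', Prod.mk.injEq, Prod.swap_prod_mk]
      rintro ⟨((⟨e1,e2⟩|⟨e1,e2⟩)|(⟨e1,e2⟩|⟨e1,e2⟩)|(⟨e1,e2⟩|⟨e1,e2⟩)), -⟩ <;> contradiction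
    have A34 : G'.Adj v3 v4 := by
      simp only [hG', sup_adj, sdiff_adj]
      refine Or.inl ⟨h34, ?_⟩
      simp only [fromEdgeSet_adj, Set.mem_insert_iff, Set.mem_singleton_iff, Sym2.eq,
        Sym2.rel_iff', Prod.mk.injEq, Prod.swap_prod_mk]
      rintro ⟨((⟨e1,e2⟩|⟨e1,e2⟩)|(⟨e1,e2⟩|⟨e1,e2⟩)|(⟨e1,e2⟩|⟨e1,e2⟩)), -⟩ <;> contradiction
    have Ay1v2 : G'.Adj y1 v2 := by
      simp only [hG', sup_adj]
      exact Or.inr ((fromEdgeSet_adj _).mpr ⟨Set.mem_insert _ _, hy1v2⟩)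
    have hinj : Function.Injective ![v1, v4, y1, v3, v2] := by
      intro a b hab
      fin_cases a <;> fin_cases b <;> simp at hab <;> first | rfl | contradiction
    refine ⟨⟨![v1, v4, y1, v3, v2], hinj⟩, ?_⟩
    intro a b hab
    fin_cases a <;> fin_cases b <;>
      simp only [Function.Embedding.coeFn_mk, Matrix.cons_val', Matrix.cons_val_zero,
        Matrix.cons_val_one, Matrix.head_cons, Matrix.cons_val_fin_one, Matrix.head_fin_const,
        Matrix.cons_val_succ] <;>
      first
        | exact absurd hab (by decide)
        | exact A12 | exact A12.symm | exact A13 | exact A13.symm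
        | exact A1y1 | exact A1y1.symm | exact A23 | exact A23.symm
        | exact A24 | exact A24.symm | exact A34 | exact A34.symm
        | exact Ay1v2 | exact Ay1v2.symm
end
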